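/- arXiv:1309.2343 — 2 statements merged into one kernel-verified Lean document; each statement's English description precedes it below -/
import Mathlib

section
/- For all t > 0 and P > 0, the function f_P(t) = ln(2 e^{-(1+P)} (1+P)) - Pt/(1+P) + sqrt(1+4Pt) - ln(1 + sqrt(1+4Pt)) satisfies f_P(t) ≤ 0, with equality exactly at t = 1+P. -/
open Real

/-- The function `f_P` arising in the bound on the Radon–Nikodym derivative of the
power-shell-induced output distribution against the capacity-achieving Gaussian output. -/
noncomputable def fP (P t : ℝ) : ℝ :=
  Real.log (2 * Real.exp (-(1 + P)) * (1 + P)) - P * t / (1 + P)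
    + Real.sqrt (1 + 4 * P * t) - Real.log (1 + Real.sqrt (1 + 4 * P * t))

theorem fP_nonpos_and_eq_iff (P t : ℝ) (hP : 0 < P) (ht : 0 < t) :
    fP P t ≤ 0 ∧ (fP P t = 0 ↔ t = 1 + P) := by
  have ha0 : (0:ℝ) < 1 + P := by linarith
  have hpt : (0:ℝ) < 1 + 4 * P * t := by nlinarith
  set s := Real.sqrt (1 + 4 * P * t) with hs_def
  have hs2 : s ^ 2 = 1 + 4 * P * t := Real.sq_sqrt hpt.le
  have hs0 : 0 ≤ s := Real.sqrt_nonneg _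
  have hs1 : 1 < s := by nlinarith
  set a := 1 + P with ha_def
  set u := 1 + s with hu_def
  have hu2 : (2:ℝ) < u := by simp only [hu_def]; linarith
  have hu0 : (0:ℝ) < u := by linarith
  have heq : fP P t = (Real.log (2 * a / u) - (2 * a / u - 1))
      - (u - 2 * a) ^ 2 * (u - 2) / (4 * a * u) := by
    have hlog1 : Real.log (2 * Real.exp (-a) * a)
        = Real.log 2 + (-a) + Real.log a := by
      rw [Real.log_mul (by positivity) (ne_of_gt ha0),
        Real.log_mul (by norm_num) (Real.exp_ne_zero _), Real.log_exp]
    have hlog2 : Real.log (2 * a / u) = Real.log 2 + Real.log a - Real.log u := by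
      rw [Real.log_div (by positivity) (ne_of_gt hu0),
        Real.log_mul (by norm_num) (ne_of_gt ha0)]
    simp only [fP, ← hs_def, ← ha_def, ← hu_def]
    rw [hlog1, hlog2]
    have hPt : P * t = (s ^ 2 - 1) / 4 := by linarith
    rw [hPt]
    field_simp
    ring
  have hlogle : Real.log (2 * a / u) ≤ 2 * a / u - 1 :=
    Real.log_le_sub_one_of_pos (by positivity)
  have hgap : 0 ≤ (u - 2 * a) ^ 2 * (u - 2) / (4 * a * u) := by
    apply div_nonneg
    · exact mul_nonneg (sq_nonneg _) (by linarith)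
    · positivity
  have hiff : u = 2 * a ↔ t = 1 + P := by
    constructor
    · intro h
      have : s = 1 + 2 * P := by simp only [hu_def, ha_def] at h; linarith
      nlinarith [hs2]
    · intro h
      have : s = 1 + 2 * P := by
        rw [hs_def, h]
        rw [show 1 + 4 * P * (1 + P) = (1 + 2 * P) ^ 2 by ring]
        exact Real.sqrt_sq (by linarith)
      simp only [hu_def, ha_def, this]; ring
  constructor
  · rw [heq]; linarith
  constructor
  · intro h0
    by_contra hne
    have hune : u ≠ 2 * a := fun h => hne (hiff.mp h)
    have hx : 2 * a / u ≠ 1 := by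
      intro h
      apply hune
      field_simp at h
      linarith
    have : Real.log (2 * a / u) < 2 * a / u - 1 :=
      Real.log_lt_sub_one_of_pos (by positivity) hx
    rw [heq] at h0
    linarith
  · intro h
    have hu : u = 2 * a := hiff.mpr h
    rw [heq, hu]
    have : 2 * a / (2 * a) = 1 := by field_simp
    rw [this]
    simp
end

section
/- Let P_{Y|X} be a Markov kernel from 𝒳 to 𝒴, P_X a probability measure on 𝒳, Q_Y a probability measure on 𝒴 such that each P_{Y|X=x} ≪ Q_Y, define i(x,y) = log (dP_{Y|X=x}/dQ_Y)(y), and let K := ess sup_{P_Y} dP_Y/dQ_Y < ∞ where P_Y is the induced output law. Then for any M ≥ 1 and threshold γ > 0, there exists a codebook of M points x(1),…,x(M) in 𝒳 and a decoder such that the average error probability ε satisfies ε ≤ (P_X ⊗ P_{Y|X})[i(X,Y) ≤ log γ] + K · ((M-1)/2) · (P_X ⊗ Q_Y)[i(X,Y) > log γ]. -/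
open MeasureTheory ProbabilityTheory ENNReal

/-- Random-coding induction: codewords are chosen one at a time, each new codeword being
chosen to make its "cost" at most its expectation.  `a x` is the outage cost of codeword `x`,
`b x x'` is the pairwise confusion cost of an earlier codeword `x` on a later codeword `x'`,
and `h x` is an upper bound for `∫⁻ x', b x x' ∂PX`. -/
private lemma DT_random_coding_aux {X : Type*} [MeasurableSpace X] [Nonempty X]
    (PX : Measure X) [IsProbabilityMeasure PX]
    (a h : X → ℝ≥0∞) (b : X → X → ℝ≥0∞)
    (ha : Measurable a) (hh : Measurable h) (hb : ∀ x, Measurable (b x))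
    (hbh : ∀ x, ∫⁻ x', b x x' ∂PX ≤ h x) (n : ℕ) :
    ∀ lam : ℕ, ∃ c : ℕ → X,
      2 * ((∑ m ∈ Finset.range n, (a (c m) + ∑ j ∈ Finset.range m, b (c j) (c m)))
          + (lam : ℝ≥0∞) * ∑ m ∈ Finset.range n, h (c m))
        ≤ 2 * (n : ℝ≥0∞) * ∫⁻ x, a x ∂PX
          + ((∑ m ∈ Finset.range n, (2 * m + 2 * lam) : ℕ) : ℝ≥0∞) * ∫⁻ x, h x ∂PX := by
  induction n with
  | zero => exact fun lam => ⟨fun _ => Classical.arbitrary X, by simp⟩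
  | succ n ih =>
    intro lam
    obtain ⟨c, hc⟩ := ih (lam + 1)
    set A := ∫⁻ x, a x ∂PX with hAdef
    set H := ∫⁻ x, h x ∂PX with hHdef
    set D1 : ℕ := ∑ m ∈ Finset.range n, (2 * m + 2 * (lam + 1)) with hD1def
    rw [Nat.cast_add, Nat.cast_one] at hc
    -- choose the next codeword by the first moment method
    set f : X → ℝ≥0∞ :=
      fun x => a x + (∑ j ∈ Finset.range n, b (c j) x) + (lam : ℝ≥0∞) * h x with hfdef
    have hfm : AEMeasurable f PX :=
      (((ha.add (Finset.measurable_sum _ fun j _ => hb (c j))).add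
        (hh.const_mul _))).aemeasurable
    obtain ⟨x0, hx0⟩ := exists_le_lintegral hfm
    have hint : ∫⁻ x, f x ∂PX
        ≤ A + (∑ j ∈ Finset.range n, h (c j)) + (lam : ℝ≥0∞) * H := by
      rw [hfdef]
      simp only
      rw [lintegral_add_right _ (hh.const_mul _), lintegral_add_left ha,
        lintegral_const_mul _ hh, lintegral_finset_sum _ fun j _ => hb (c j)]
      gcongr with j hj
      exact hbh (c j)
    refine ⟨Function.update c n x0, ?_⟩
    have hcc : ∀ j, j < n → Function.update c n x0 j = c j := fun j hj =>
      Function.update_of_ne hj.ne _ _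
    have e1 : ∑ m ∈ Finset.range (n + 1),
        (a (Function.update c n x0 m)
          + ∑ j ∈ Finset.range m, b (Function.update c n x0 j) (Function.update c n x0 m))
        = (∑ m ∈ Finset.range n, (a (c m) + ∑ j ∈ Finset.range m, b (c j) (c m)))
          + (a x0 + ∑ j ∈ Finset.range n, b (c j) x0) := by
      rw [Finset.sum_range_succ]
      congr 1
      · refine Finset.sum_congr rfl fun m hm => ?_
        rw [Finset.mem_range] at hm
        rw [hcc m hm]
        congr 1
        refine Finset.sum_congr rfl fun j hj => ?_
        rw [Finset.mem_range] at hj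
        rw [hcc j (hj.trans hm)]
      · rw [Function.update_self]
        congr 1
        refine Finset.sum_congr rfl fun j hj => ?_
        rw [Finset.mem_range] at hj
        rw [hcc j hj]
    have e2 : ∑ m ∈ Finset.range (n + 1), h (Function.update c n x0 m)
        = (∑ m ∈ Finset.range n, h (c m)) + h x0 := by
      rw [Finset.sum_range_succ, Function.update_self]
      congr 1
      exact Finset.sum_congr rfl fun m hm => by rw [hcc m (Finset.mem_range.mp hm)]
    rw [e1, e2]
    set Cn := ∑ m ∈ Finset.range n, (a (c m) + ∑ j ∈ Finset.range m, b (c j) (c m)) with hCn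
    set Hn := ∑ m ∈ Finset.range n, h (c m) with hHn
    set Bx := ∑ j ∈ Finset.range n, b (c j) x0 with hBx
    have hx0' : a x0 + Bx + (lam : ℝ≥0∞) * h x0 ≤ A + Hn + (lam : ℝ≥0∞) * H := hx0.trans hint
    have hDnat : (∑ m ∈ Finset.range (n + 1), (2 * m + 2 * lam)) = D1 + 2 * lam := by
      rw [hD1def]
      simp only [Finset.sum_range_succ, Finset.sum_add_distrib, Finset.sum_const,
        Finset.card_range, smul_eq_mul]
      ring
    calc 2 * (Cn + (a x0 + Bx) + (lam : ℝ≥0∞) * (Hn + h x0))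
        = 2 * (Cn + (lam : ℝ≥0∞) * Hn) + 2 * (a x0 + Bx + (lam : ℝ≥0∞) * h x0) := by ring
      _ ≤ 2 * (Cn + (lam : ℝ≥0∞) * Hn) + 2 * (A + Hn + (lam : ℝ≥0∞) * H) := by gcongr
      _ = 2 * (Cn + ((lam : ℝ≥0∞) + 1) * Hn) + (2 * A + 2 * (lam : ℝ≥0∞) * H) := by ring
      _ ≤ (2 * (n : ℝ≥0∞) * A + (D1 : ℝ≥0∞) * H) + (2 * A + 2 * (lam : ℝ≥0∞) * H) :=
          add_le_add_left hc _
      _ = 2 * ((n : ℕ) + 1 : ℝ≥0∞) * A + ((D1 : ℝ≥0∞) + 2 * (lam : ℝ≥0∞)) * H := by ring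
      _ = 2 * ((n + 1 : ℕ) : ℝ≥0∞) * A
          + ((∑ m ∈ Finset.range (n + 1), (2 * m + 2 * lam) : ℕ) : ℝ≥0∞) * H := by
          rw [hDnat]
          push_cast
          ring

/-- Modified dependence-testing achievability bound with change of measure
(Theorem 1 of the paper, without cost constraint).  The decoder outputs the first
codeword index whose modified information density with the output exceeds `log γ`;
there exists a codebook of `M` codewords whose average error probability is bounded
by the outage probability plus `K (M-1)/2` times the confusion probability. -/
theorem modified_DT_achievability {X Y : Type*} [MeasurableSpace X] [MeasurableSpace Y]
    (κ : Kernel X Y) [IsMarkovKernel κ]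
    (PX : Measure X) [IsProbabilityMeasure PX]
    (QY : Measure Y) [IsProbabilityMeasure QY]
    (hac : ∀ x, κ x ≪ QY)
    (i : X → Y → ℝ) (hi : ∀ x y, i x y = Real.log (((κ x).rnDeriv QY y).toReal))
    (K : ℝ≥0∞) (hK : K = essSup ((PX.bind κ).rnDeriv QY) QY) (hKfin : K ≠ ⊤)
    (M : ℕ) (hM : 1 ≤ M) (γ : ℝ) (hγ : 0 < γ) :
    ∃ (enc : Fin M → X) (dec : Y → Fin M),
      (M : ℝ≥0∞)⁻¹ * ∑ m : Fin M, (κ (enc m)) {y | dec y ≠ m} ≤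
        (PX ⊗ₘ κ) {p : X × Y | i p.1 p.2 ≤ Real.log γ}
          + K * (((M : ℝ≥0∞) - 1) / 2)
            * (PX.prod QY) {p : X × Y | Real.log γ < i p.1 p.2} := by
  classical
  have hXne : Nonempty X := by
    by_contra hc
    rw [not_nonempty_iff] at hc
    have h1 := measure_univ (μ := PX)
    rw [Set.univ_eq_empty_iff.mpr hc, measure_empty] at h1
    exact zero_ne_one h1
  set S : Set (X × Y) := {p : X × Y | i p.1 p.2 ≤ Real.log γ} with hSdef
  set S' : Set (X × Y) := {p : X × Y | Real.log γ < i p.1 p.2} with hS'def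
  set T : Set (X × Y) := toMeasurable (PX ⊗ₘ κ) S with hTdef
  set T' : Set (X × Y) := toMeasurable (PX.prod QY) S' with hT'def
  have hT : MeasurableSet T := measurableSet_toMeasurable _ _
  have hT' : MeasurableSet T' := measurableSet_toMeasurable _ _
  have hST : S ⊆ T := subset_toMeasurable _ _
  have hST' : S' ⊆ T' := subset_toMeasurable _ _
  -- induced output measure
  have hPY : PX.bind ⇑κ ≪ QY := by
    refine Measure.AbsolutelyContinuous.mk fun s hs h0 => ?_
    rw [Measure.bind_apply hs κ.measurable.aemeasurable,
      lintegral_congr fun x => (hac x) h0, lintegral_zero]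
  have hPYprob : IsProbabilityMeasure (PX.bind ⇑κ) := by
    constructor
    rw [Measure.bind_apply MeasurableSet.univ κ.measurable.aemeasurable]
    simp
  -- cost functions
  set a : X → ℝ≥0∞ := fun x => κ x (Prod.mk x ⁻¹' T) with hadef
  set b : X → X → ℝ≥0∞ := fun x x' => κ x' (Prod.mk x ⁻¹' T') with hbdef
  set h : X → ℝ≥0∞ := fun x => K * QY (Prod.mk x ⁻¹' T') with hhdef
  have ha : Measurable a := Kernel.measurable_kernel_prodMk_left hT
  have hb : ∀ x, Measurable (b x) := fun x =>
    κ.measurable_coe (measurable_prodMk_left hT')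
  have hh : Measurable h := (measurable_measure_prodMk_left hT').const_mul K
  have hbh : ∀ x, ∫⁻ x', b x x' ∂PX ≤ h x := by
    intro x
    have hC : MeasurableSet (Prod.mk x ⁻¹' T') := measurable_prodMk_left hT'
    have h1 : ∫⁻ x', b x x' ∂PX = (PX.bind ⇑κ) (Prod.mk x ⁻¹' T') :=
      (Measure.bind_apply hC κ.measurable.aemeasurable).symm
    rw [h1, ← Measure.setLIntegral_rnDeriv' hPY hC]
    calc ∫⁻ y in Prod.mk x ⁻¹' T', (PX.bind ⇑κ).rnDeriv QY y ∂QY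
        ≤ ∫⁻ _ in Prod.mk x ⁻¹' T', K ∂QY := by
          refine lintegral_mono_ae (ae_restrict_of_ae ?_)
          rw [hK]
          exact ENNReal.ae_le_essSup _
      _ = K * QY (Prod.mk x ⁻¹' T') := setLIntegral_const _ _
  have hA : ∫⁻ x, a x ∂PX = (PX ⊗ₘ κ) S := by
    rw [← measure_toMeasurable S, ← hTdef, Measure.compProd_apply hT]
  have hH : ∫⁻ x, h x ∂PX = K * (PX.prod QY) S' := by
    rw [hhdef]
    rw [lintegral_const_mul _ (measurable_measure_prodMk_left hT'),
      ← Measure.prod_apply hT']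
    rw [hT'def, measure_toMeasurable]
  -- random coding
  obtain ⟨c, hc⟩ := DT_random_coding_aux PX a h b ha hh hb hbh M 0
  simp only [Nat.cast_zero, zero_mul, add_zero, mul_zero, Nat.mul_zero] at hc
  -- `hc : 2 * ∑ m in range M, (a (c m) + ∑ j in range m, b (c j) (c m))
  --        ≤ 2 * M * ∫ a + (∑ m in range M, 2 * m) * ∫ h`
  set enc : Fin M → X := fun m => c m.val with hencdef
  have hM0 : 0 < M := hM
  set dec : Y → Fin M := fun y =>
    if hy : (Finset.univ.filter fun m : Fin M => Real.log γ < i (enc m) y).Nonempty then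
      Finset.min' _ hy
    else ⟨0, hM0⟩ with hdecdef
  refine ⟨enc, dec, ?_⟩
  -- error events are contained in the union of outage and confusion events
  have herr : ∀ m : Fin M, {y | dec y ≠ m} ⊆
      (Prod.mk (c m.val) ⁻¹' T) ∪ ⋃ j ∈ Finset.range m.val, (Prod.mk (c j) ⁻¹' T') := by
    intro m y hy
    by_cases hm : Real.log γ < i (enc m) y
    · right
      have hmem : m ∈ Finset.univ.filter fun m : Fin M => Real.log γ < i (enc m) y := by
        simp [hm]
      have hne : (Finset.univ.filter fun m : Fin M => Real.log γ < i (enc m) y).Nonempty :=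
        ⟨m, hmem⟩
      have hdec : dec y = Finset.min' _ hne := by rw [hdecdef]; simp [hne]
      have hlt : dec y < m := by
        rcases lt_or_eq_of_le (hdec ▸ Finset.min'_le _ m hmem) with h' | h'
        · exact h'
        · exact absurd h' hy
      have hdmem : dec y ∈ Finset.univ.filter fun m : Fin M => Real.log γ < i (enc m) y := by
        rw [hdec]; exact Finset.min'_mem _ _
      have hdlt : Real.log γ < i (enc (dec y)) y := by
        simpa using hdmem
      refine Set.mem_biUnion (Finset.mem_range.mpr hlt) ?_
      exact hST' hdlt
    · left
      exact hST (not_lt.mp hm)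
  -- per-message error bound
  have hbound : ∀ m : Fin M, κ (enc m) {y | dec y ≠ m}
      ≤ a (c m.val) + ∑ j ∈ Finset.range m.val, b (c j) (c m.val) := by
    intro m
    calc κ (enc m) {y | dec y ≠ m}
        ≤ κ (enc m) ((Prod.mk (c m.val) ⁻¹' T)
            ∪ ⋃ j ∈ Finset.range m.val, (Prod.mk (c j) ⁻¹' T')) :=
          measure_mono (herr m)
      _ ≤ κ (enc m) (Prod.mk (c m.val) ⁻¹' T)
            + κ (enc m) (⋃ j ∈ Finset.range m.val, (Prod.mk (c j) ⁻¹' T')) :=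
          measure_union_le _ _
      _ ≤ a (c m.val) + ∑ j ∈ Finset.range m.val, b (c j) (c m.val) := by
          refine add_le_add le_rfl ?_
          exact measure_biUnion_finset_le _ _
  have hsum : ∑ m : Fin M, κ (enc m) {y | dec y ≠ m}
      ≤ ∑ m ∈ Finset.range M, (a (c m) + ∑ j ∈ Finset.range m, b (c j) (c m)) := by
    rw [← Fin.sum_univ_eq_sum_range (fun m => a (c m) + ∑ j ∈ Finset.range m, b (c j) (c m)) M]
    exact Finset.sum_le_sum fun m _ => hbound m
  -- arithmetic
  have hMne : (M : ℝ≥0∞) ≠ 0 := by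
    simp only [ne_eq, Nat.cast_eq_zero]
    omega
  have hMtop : (M : ℝ≥0∞) ≠ ⊤ := natCast_ne_top M
  have hcoeff : ((∑ m ∈ Finset.range M, 2 * m : ℕ) : ℝ≥0∞)
      = (M : ℝ≥0∞) * ((M : ℝ≥0∞) - 1) := by
    have h1 : (∑ m ∈ Finset.range M, 2 * m : ℕ) = M * (M - 1) := by
      rw [← Finset.mul_sum, mul_comm, Finset.sum_range_id_mul_two]
    rw [h1, Nat.cast_mul, ENNReal.natCast_sub, Nat.cast_one]
  rw [hA, hH, hcoeff] at hc
  set Cn := ∑ m ∈ Finset.range M, (a (c m) + ∑ j ∈ Finset.range m, b (c j) (c m)) with hCn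
  have key : (M : ℝ≥0∞)⁻¹ * Cn
      ≤ (PX ⊗ₘ κ) S + (((M : ℝ≥0∞) - 1) / 2) * (K * (PX.prod QY) S') := by
    have h2M : (2 * (M : ℝ≥0∞)) ≠ 0 := mul_ne_zero two_ne_zero hMne
    have h2Mtop : (2 * (M : ℝ≥0∞)) ≠ ⊤ := by
      exact ENNReal.mul_ne_top ofNat_ne_top hMtop
    have e3 : (M : ℝ≥0∞)⁻¹ * Cn = (2 * (M : ℝ≥0∞))⁻¹ * (2 * Cn) := by
      rw [ENNReal.mul_inv (Or.inl two_ne_zero) (Or.inl ofNat_ne_top),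
        mul_mul_mul_comm, ENNReal.inv_mul_cancel two_ne_zero ofNat_ne_top, one_mul]
    rw [e3]
    calc (2 * (M : ℝ≥0∞))⁻¹ * (2 * Cn)
        ≤ (2 * (M : ℝ≥0∞))⁻¹ * (2 * (M : ℝ≥0∞) * ((PX ⊗ₘ κ) S)
            + (M : ℝ≥0∞) * ((M : ℝ≥0∞) - 1) * (K * (PX.prod QY) S')) :=
          mul_le_mul_right hc _
      _ = (PX ⊗ₘ κ) S + (((M : ℝ≥0∞) - 1) / 2) * (K * (PX.prod QY) S') := by
          rw [mul_add]
          congr 1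
          · rw [← mul_assoc, ENNReal.inv_mul_cancel h2M h2Mtop, one_mul]
          · rw [ENNReal.mul_inv (Or.inl two_ne_zero) (Or.inl ofNat_ne_top)]
            rw [ENNReal.div_eq_inv_mul]
            calc 2⁻¹ * (M : ℝ≥0∞)⁻¹ * ((M : ℝ≥0∞) * ((M : ℝ≥0∞) - 1) * (K * (PX.prod QY) S'))
                = 2⁻¹ * (((M : ℝ≥0∞)⁻¹ * (M : ℝ≥0∞)) * (((M : ℝ≥0∞) - 1)
                    * (K * (PX.prod QY) S'))) := by ring
              _ = 2⁻¹ * (((M : ℝ≥0∞) - 1) * (K * (PX.prod QY) S')) := by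
                  rw [ENNReal.inv_mul_cancel hMne hMtop, one_mul]
              _ = 2⁻¹ * ((M : ℝ≥0∞) - 1) * (K * (PX.prod QY) S') := by ring
  calc (M : ℝ≥0∞)⁻¹ * ∑ m : Fin M, κ (enc m) {y | dec y ≠ m}
      ≤ (M : ℝ≥0∞)⁻¹ * Cn := by gcongr
    _ ≤ (PX ⊗ₘ κ) S + (((M : ℝ≥0∞) - 1) / 2) * (K * (PX.prod QY) S') := key
    _ = (PX ⊗ₘ κ) S + K * (((M : ℝ≥0∞) - 1) / 2) * (PX.prod QY) S' := by ring
end
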